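/- arXiv:2604.27627 — 2 statements merged into one kernel-verified Lean document; each statement's English description precedes it below -/
import Mathlib

section
/- Let p ≥ 1, let c be a control function and suppose Y^0,…,Y^{n−1} (n = ⌊p⌋) are maps into spaces of multilinear forms satisfying the controlled-path remainder bounds ‖R^k_{s,u}‖ ≤ C c(s,u)^{(n−k)/p}, and suppose ‖𝕏^{k+1}_{u,t}‖ ≤ C c(u,t)^{(k+1)/p}. Define Ξ_{s,t} := Σ_{k=0}^{n−1} Y^k_s 𝕏^{k+1}_{s,t}. Then the coboundary δΞ_{s,u,t} := Ξ_{s,t} − Ξ_{s,u} − Ξ_{u,t} equals −Σ_{k=0}^{n−1} R^k_{s,u} ⊗ 𝕏^{k+1}_{u,t}, provided the reduced Chen relation 𝕏^{k+1}_{s,t} = Sym(Σ_{j=0}^{k+1} 𝕏^{k+1−j}_{s,u} ⊗ 𝕏^j_{u,t}) holds and each Y^k_s is symmetric with Y^k_u = Σ_{j=k}^{n−1} Y^j_s 𝕏^{j−k}_{s,u} + R^k_{s,u}. -/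
open scoped BigOperators

/-- the algebraic core of the sewing argument for the reduced rough integral.
The symmetric tensor levels are encoded in a commutative normed algebra `A` (products of levels
corresponding to symmetrized tensor products), the levels of the reduced rough path being
`𝕏 k s t ∈ A` with `𝕏 0 = 1`, and `Y k s, R k s u : A →L[ℝ] W` pairing a level against a
linear functional, so that `Ξ_{s,t} = Σ_{k<n} Y^k_s 𝕏^{k+1}_{s,t}`.  Provided the reduced Chen
relation holds, each `Y^k` satisfies the controlled expansion `Y^k_u = Σ_{j=k}^{n-1} Y^j_s
𝕏^{j-k}_{s,u} + R^k_{s,u}`, and the controlled-path/rough-path norm bounds hold, the coboundary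
satisfies `δΞ_{s,u,t} = -Σ_{k<n} R^k_{s,u} ⊗ 𝕏^{k+1}_{u,t}`. -/
theorem stmt8 {A W : Type*} [NormedCommRing A] [NormedAlgebra ℝ A]
    [NormedAddCommGroup W] [NormedSpace ℝ W]
    (T p : ℝ) (hT : 0 ≤ T) (hp : 1 ≤ p) (n : ℕ) (hn : n = ⌊p⌋₊)
    (c : ℝ → ℝ → ℝ)
    (hc_nonneg : ∀ s t, 0 ≤ s → s ≤ t → t ≤ T → 0 ≤ c s t)
    (hc_diag : ∀ t, 0 ≤ t → t ≤ T → c t t = 0)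
    (hc_super : ∀ s u t, 0 ≤ s → s ≤ u → u ≤ t → t ≤ T → c s u + c u t ≤ c s t)
    (𝕏 : ℕ → ℝ → ℝ → A) (Y : ℕ → ℝ → (A →L[ℝ] W)) (R : ℕ → ℝ → ℝ → (A →L[ℝ] W))
    (hone : ∀ s t, 0 ≤ s → s ≤ t → t ≤ T → 𝕏 0 s t = 1)
    (hchen : ∀ k, ∀ s u t, 0 ≤ s → s ≤ u → u ≤ t → t ≤ T →
      𝕏 k s t = ∑ j ∈ Finset.range (k + 1), 𝕏 (k - j) s u * 𝕏 j u t)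
    (hctrl : ∀ k, k < n → ∀ s u, 0 ≤ s → s ≤ u → u ≤ T → ∀ a : A,
      Y k u a = (∑ j ∈ Finset.Icc k (n - 1), Y j s (𝕏 (j - k) s u * a)) + R k s u a)
    (C : ℝ)
    (hR : ∀ k, k < n → ∀ s u, 0 ≤ s → s ≤ u → u ≤ T →
      ‖R k s u‖ ≤ C * c s u ^ (((n : ℝ) - (k : ℝ)) / p))
    (h𝕏 : ∀ k, k < n → ∀ u t, 0 ≤ u → u ≤ t → t ≤ T →
      ‖𝕏 (k + 1) u t‖ ≤ C * c u t ^ (((k : ℝ) + 1) / p)) :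
    ∀ s u t, 0 ≤ s → s ≤ u → u ≤ t → t ≤ T →
      (∑ k ∈ Finset.range n, Y k s (𝕏 (k + 1) s t)) -
          (∑ k ∈ Finset.range n, Y k s (𝕏 (k + 1) s u)) -
          (∑ k ∈ Finset.range n, Y k u (𝕏 (k + 1) u t)) =
        -∑ k ∈ Finset.range n, R k s u (𝕏 (k + 1) u t) := by

  intro s u t hs hsu hut htT
  have hu : 0 ≤ u := le_trans hs hsu
  have huT : u ≤ T := le_trans hut htT
  have h1 : (∑ k ∈ Finset.range n, Y k s (𝕏 (k + 1) s t))
      = (∑ k ∈ Finset.range n, ∑ j ∈ Finset.range (k + 1),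
          Y k s (𝕏 (k - j) s u * 𝕏 (j + 1) u t))
        + (∑ k ∈ Finset.range n, Y k s (𝕏 (k + 1) s u)) := by
    rw [← Finset.sum_add_distrib]
    refine Finset.sum_congr rfl fun k _ => ?_
    rw [hchen (k + 1) s u t hs hsu hut htT, map_sum, Finset.sum_range_succ']
    simp [hone u t hu hut htT, Nat.succ_sub_succ]
  have h2 : (∑ k ∈ Finset.range n, Y k u (𝕏 (k + 1) u t))
      = (∑ k ∈ Finset.range n, ∑ j ∈ Finset.Icc k (n - 1),
          Y j s (𝕏 (j - k) s u * 𝕏 (k + 1) u t))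
        + ∑ k ∈ Finset.range n, R k s u (𝕏 (k + 1) u t) := by
    rw [← Finset.sum_add_distrib]
    refine Finset.sum_congr rfl fun k hk => ?_
    exact hctrl k (Finset.mem_range.mp hk) s u hs hsu huT _
  have h3 : (∑ k ∈ Finset.range n, ∑ j ∈ Finset.range (k + 1),
          Y k s (𝕏 (k - j) s u * 𝕏 (j + 1) u t))
      = (∑ k ∈ Finset.range n, ∑ j ∈ Finset.Icc k (n - 1),
          Y j s (𝕏 (j - k) s u * 𝕏 (k + 1) u t)) := by
    refine Finset.sum_comm' (fun x y => ?_)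
    simp only [Finset.mem_range, Finset.mem_Icc]
    omega
  rw [h1, h2, h3]
  abel
end

section
/- Under the hypotheses of the previous statement, the coboundary satisfies the quantitative bound ‖δΞ_{s,u,t}‖ ≤ C' Σ_{k=0}^{n−1} c(s,u)^{(n−k)/p} c(u,t)^{(k+1)/p}, and for every k the exponents sum to (n+1)/p > 1, where n = ⌊p⌋. -/
open scoped BigOperators

/-- the algebraic core of the sewing argument for the reduced rough integral.
The symmetric tensor levels are encoded in a commutative normed algebra `A` (products of levels
corresponding to symmetrized tensor products), the levels of the reduced rough path being
`𝕏 k s t ∈ A` with `𝕏 0 = 1`, and `Y k s, R k s u : A →L[ℝ] W` pairing a level against a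
linear functional, so that `Ξ_{s,t} = Σ_{k<n} Y^k_s 𝕏^{k+1}_{s,t}`.  Provided the reduced Chen
relation holds, each `Y^k` satisfies the controlled expansion `Y^k_u = Σ_{j=k}^{n-1} Y^j_s
𝕏^{j-k}_{s,u} + R^k_{s,u}`, and the controlled-path/rough-path norm bounds hold, the coboundary
satisfies `δΞ_{s,u,t} = -Σ_{k<n} R^k_{s,u} ⊗ 𝕏^{k+1}_{u,t}`. -/
theorem stmt9 {A W : Type*} [NormedCommRing A] [NormedAlgebra ℝ A]
    [NormedAddCommGroup W] [NormedSpace ℝ W]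
    (T p : ℝ) (hT : 0 ≤ T) (hp : 1 ≤ p) (n : ℕ) (hn : n = ⌊p⌋₊)
    (c : ℝ → ℝ → ℝ)
    (hc_nonneg : ∀ s t, 0 ≤ s → s ≤ t → t ≤ T → 0 ≤ c s t)
    (hc_diag : ∀ t, 0 ≤ t → t ≤ T → c t t = 0)
    (hc_super : ∀ s u t, 0 ≤ s → s ≤ u → u ≤ t → t ≤ T → c s u + c u t ≤ c s t)
    (𝕏 : ℕ → ℝ → ℝ → A) (Y : ℕ → ℝ → (A →L[ℝ] W)) (R : ℕ → ℝ → ℝ → (A →L[ℝ] W))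
    (hone : ∀ s t, 0 ≤ s → s ≤ t → t ≤ T → 𝕏 0 s t = 1)
    (hchen : ∀ k, ∀ s u t, 0 ≤ s → s ≤ u → u ≤ t → t ≤ T →
      𝕏 k s t = ∑ j ∈ Finset.range (k + 1), 𝕏 (k - j) s u * 𝕏 j u t)
    (hctrl : ∀ k, k < n → ∀ s u, 0 ≤ s → s ≤ u → u ≤ T → ∀ a : A,
      Y k u a = (∑ j ∈ Finset.Icc k (n - 1), Y j s (𝕏 (j - k) s u * a)) + R k s u a)
    (C : ℝ)
    (hR : ∀ k, k < n → ∀ s u, 0 ≤ s → s ≤ u → u ≤ T →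
      ‖R k s u‖ ≤ C * c s u ^ (((n : ℝ) - (k : ℝ)) / p))
    (h𝕏 : ∀ k, k < n → ∀ u t, 0 ≤ u → u ≤ t → t ≤ T →
      ‖𝕏 (k + 1) u t‖ ≤ C * c u t ^ (((k : ℝ) + 1) / p)) :
    (∃ C' : ℝ, 0 ≤ C' ∧ ∀ s u t, 0 ≤ s → s ≤ u → u ≤ t → t ≤ T →
      ‖(∑ k ∈ Finset.range n, Y k s (𝕏 (k + 1) s t)) -
          (∑ k ∈ Finset.range n, Y k s (𝕏 (k + 1) s u)) -
          (∑ k ∈ Finset.range n, Y k u (𝕏 (k + 1) u t))‖ ≤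
        C' * ∑ k ∈ Finset.range n,
          c s u ^ (((n : ℝ) - (k : ℝ)) / p) * c u t ^ (((k : ℝ) + 1) / p)) ∧
    (∀ k : ℕ, ((n : ℝ) - (k : ℝ)) / p + ((k : ℝ) + 1) / p = ((n : ℝ) + 1) / p) ∧
    1 < ((n : ℝ) + 1) / p := by

  refine ⟨⟨C * C, mul_self_nonneg C, ?_⟩, fun k => by ring, ?_⟩
  · intro s u t hs hsu hut htT
    have hu0 : 0 ≤ u := le_trans hs hsu
    have huT : u ≤ T := le_trans hut htT
    -- the algebraic identity
    have h1 : ∀ k ∈ Finset.range n, Y k s (𝕏 (k + 1) s t) =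
        Y k s (𝕏 (k + 1) s u) +
          ∑ j ∈ Finset.range (k + 1), Y k s (𝕏 (k - j) s u * 𝕏 (j + 1) u t) := by
      intro k _
      have hch := hchen (k + 1) s u t hs hsu hut htT
      rw [hch, Finset.sum_range_succ', Nat.sub_zero, hone u t hu0 hut htT, mul_one]
      simp only [Nat.succ_sub_succ]
      rw [map_add, map_sum, add_comm]
    have hswap : (∑ k ∈ Finset.range n, ∑ j ∈ Finset.range (k + 1),
        Y k s (𝕏 (k - j) s u * 𝕏 (j + 1) u t)) =
        ∑ j ∈ Finset.range n, ∑ k ∈ Finset.Icc j (n - 1),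
          Y k s (𝕏 (k - j) s u * 𝕏 (j + 1) u t) := by
      refine Finset.sum_comm' ?_
      intro k j
      simp only [Finset.mem_range, Finset.mem_Icc]
      omega
    have h2 : ∀ j ∈ Finset.range n,
        (∑ k ∈ Finset.Icc j (n - 1), Y k s (𝕏 (k - j) s u * 𝕏 (j + 1) u t)) =
          Y j u (𝕏 (j + 1) u t) - R j s u (𝕏 (j + 1) u t) := by
      intro j hj
      rw [Finset.mem_range] at hj
      rw [hctrl j hj s u hs hsu huT (𝕏 (j + 1) u t)]
      exact (add_sub_cancel_right _ _).symm
    have hkey : (∑ k ∈ Finset.range n, Y k s (𝕏 (k + 1) s t)) -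
        (∑ k ∈ Finset.range n, Y k s (𝕏 (k + 1) s u)) -
        (∑ k ∈ Finset.range n, Y k u (𝕏 (k + 1) u t)) =
        - ∑ j ∈ Finset.range n, R j s u (𝕏 (j + 1) u t) := by
      rw [Finset.sum_congr rfl h1, Finset.sum_add_distrib, hswap,
        Finset.sum_congr rfl h2, Finset.sum_sub_distrib]
      abel
    rw [hkey, norm_neg]
    calc ‖∑ j ∈ Finset.range n, R j s u (𝕏 (j + 1) u t)‖
        ≤ ∑ j ∈ Finset.range n, ‖R j s u (𝕏 (j + 1) u t)‖ := norm_sum_le _ _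
      _ ≤ ∑ j ∈ Finset.range n,
            (C * c s u ^ (((n : ℝ) - (j : ℝ)) / p)) *
              (C * c u t ^ (((j : ℝ) + 1) / p)) := by
          refine Finset.sum_le_sum ?_
          intro j hj
          rw [Finset.mem_range] at hj
          have hRb := hR j hj s u hs hsu huT
          have hXb := h𝕏 j hj u t hu0 hut htT
          calc ‖R j s u (𝕏 (j + 1) u t)‖
              ≤ ‖R j s u‖ * ‖𝕏 (j + 1) u t‖ := ContinuousLinearMap.le_opNorm _ _
            _ ≤ (C * c s u ^ (((n : ℝ) - (j : ℝ)) / p)) *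
                  (C * c u t ^ (((j : ℝ) + 1) / p)) :=
                mul_le_mul hRb hXb (norm_nonneg _) (le_trans (norm_nonneg _) hRb)
      _ = (C * C) * ∑ k ∈ Finset.range n,
            c s u ^ (((n : ℝ) - (k : ℝ)) / p) * c u t ^ (((k : ℝ) + 1) / p) := by
          rw [Finset.mul_sum]
          exact Finset.sum_congr rfl fun k _ => by ring
  · have hp0 : 0 < p := lt_of_lt_of_le zero_lt_one hp
    rw [one_lt_div hp0, hn]
    exact_mod_cast Nat.lt_floor_add_one p
end
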